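/- There exist absolute constants a ≥ 1 and b ≥ 0 such that for every finite connected simple graph G in which every vertex has degree 3, there exists a finite connected simple graph H in which every vertex has degree 3 and whose girth is at least 6, together with a map f from the vertices of G to the vertices of H satisfying (1/a)·d_G(x,y) − b ≤ d_H(f(x),f(y)) ≤ a·d_G(x,y) + b for all vertices x, y of G, and such that every vertex of H is within graph distance b of the image of f. -/

import Mathlib

set_option linter.unusedSectionVars false
namespace QI6

def gAdj (s t : Fin 13) : Prop :=
  (s.val + 1 = t.val ∨ t.val + 1 = s.val) ∨
  ((s.val, t.val) ∈ [(0,5),(5,0),(2,7),(7,2),(4,9),(9,4),(6,11),(11,6),(10,1),(1,10),(12,3),(3,12)])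

instance : DecidableRel gAdj := fun s t => by unfold gAdj; infer_instance

lemma gAdj_symm : ∀ s t, gAdj s t → gAdj t s := by decide
lemma gAdj_irrefl : ∀ s, ¬ gAdj s s := by decide
lemma gAdj_parity : ∀ s t, gAdj s t → s.val % 2 ≠ t.val % 2 := by decide
lemma gadget_C4 : ∀ a b c d : Fin 13, gAdj a b → gAdj b c → gAdj c d → gAdj d a →
    a = c ∨ b = d := by decide

def ports : Fin 3 → Fin 13 := ![0, 8, 12]

lemma ports_inj : Function.Injective ports := by decide


section WalkDestruct
variable {α : Type*} {Γ : SimpleGraph α}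

lemma walk_len3 {a b : α} (p : Γ.Walk a b) (h : p.length = 3) :
    ∃ x y, Γ.Adj a x ∧ Γ.Adj x y ∧ Γ.Adj y b ∧ p.support = [a, x, y, b] := by
  cases p with
  | nil => simp at h
  | cons h1 q => cases q with
    | nil => simp at h
    | cons h2 r => cases r with
      | nil => simp at h
      | cons h3 s => cases s with
        | nil => exact ⟨_, _, h1, h2, h3, rfl⟩
        | cons h4 t => simp [SimpleGraph.Walk.length_cons] at h

lemma walk_len4 {a b : α} (p : Γ.Walk a b) (h : p.length = 4) :
    ∃ x y z, Γ.Adj a x ∧ Γ.Adj x y ∧ Γ.Adj y z ∧ Γ.Adj z b ∧ p.support = [a, x, y, z, b] := by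
  cases p with
  | nil => simp at h
  | cons h1 q =>
    obtain ⟨x, y, k1, k2, k3, hsup⟩ := walk_len3 q (by simpa using h)
    exact ⟨_, x, y, h1, k1, k2, k3, by simp [hsup]⟩

lemma walk_len5 {a b : α} (p : Γ.Walk a b) (h : p.length = 5) :
    ∃ x y z u, Γ.Adj a x ∧ Γ.Adj x y ∧ Γ.Adj y z ∧ Γ.Adj z u ∧ Γ.Adj u b ∧
      p.support = [a, x, y, z, u, b] := by
  cases p with
  | nil => simp at h
  | cons h1 q =>
    obtain ⟨x, y, z, k1, k2, k3, k4, hsup⟩ := walk_len4 q (by simpa using h)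
    exact ⟨_, x, y, z, h1, k1, k2, k3, k4, by simp [hsup]⟩

end WalkDestruct

section Main
variable {V : Type} [Fintype V] {G : SimpleGraph V}

lemma exists_enum (hdeg : ∀ v : V, (G.neighborSet v).ncard = 3) :
    ∃ ν : V → Fin 3 → V, (∀ u k, G.Adj u (ν u k)) ∧ (∀ u, Function.Injective (ν u)) ∧
      (∀ u v, G.Adj u v → ∃ k, ν u k = v) := by
  classical
  have hcard : ∀ u : V, Fintype.card (G.neighborSet u) = 3 := by
    intro u
    rw [← Set.toFinset_card, ← Set.ncard_eq_toFinset_card']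
    exact hdeg u
  have e : ∀ u : V, Fin 3 ≃ (G.neighborSet u) := fun u =>
    (Fintype.equivFinOfCardEq (hcard u)).symm
  refine ⟨fun u k => (e u k : V), fun u k => (e u k).2, fun u => ?_, fun u v huv => ?_⟩
  · intro k k' h
    exact (e u).injective (Subtype.ext h)
  · exact ⟨(e u).symm ⟨v, huv⟩, by simp⟩

variable (G) in
/-- cross edges -/
def Cross (ν : V → Fin 3 → V) (w x : V × Fin 13) : Prop :=
  G.Adj w.1 x.1 ∧ ∃ k m : Fin 3, ν w.1 k = x.1 ∧ ν x.1 m = w.1 ∧ w.2 = ports k ∧ x.2 = ports m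

lemma cross_symm {ν : V → Fin 3 → V} {w x : V × Fin 13} (h : Cross G ν w x) :
    Cross G ν x w := by
  obtain ⟨ha, k, m, h1, h2, h3, h4⟩ := h
  exact ⟨ha.symm, m, k, h2, h1, h4, h3⟩

lemma cross_ne {ν : V → Fin 3 → V} {w x : V × Fin 13} (h : Cross G ν w x) : w.1 ≠ x.1 :=
  h.1.ne

/-- two cross edges out of the same vertex coincide -/
lemma cross_consec {ν : V → Fin 3 → V} (hν2 : ∀ u, Function.Injective (ν u))
    {w x y : V × Fin 13} (h : Cross G ν w x) (h' : Cross G ν w y) : x = y := by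
  obtain ⟨-, k, m, h1, h2, h3, h4⟩ := h
  obtain ⟨-, k', m', h1', h2', h3', h4'⟩ := h'
  have hk : k = k' := ports_inj (h3.symm.trans h3')
  subst hk
  have hx1 : x.1 = y.1 := h1.symm.trans h1'
  rw [hx1] at h2
  have hm : m = m' := hν2 y.1 (h2.trans h2'.symm)
  subst hm
  exact Prod.ext hx1 (h4.trans h4'.symm)

/-- two cross edges between the same pair of gadgets leave via the same port -/
lemma cross_port_eq {ν : V → Fin 3 → V} (hν2 : ∀ u, Function.Injective (ν u))
    {w x w' x' : V × Fin 13} (h : Cross G ν w x) (h' : Cross G ν w' x')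
    (h1 : w.1 = w'.1) (h2 : x.1 = x'.1) : w.2 = w'.2 := by
  obtain ⟨-, k, m, e1, e2, e3, e4⟩ := h
  obtain ⟨-, k', m', e1', e2', e3', e4'⟩ := h'
  have : ν w.1 k = ν w.1 k' := by rw [e1, h2, h1, e1']
  rw [e3, e3', hν2 w.1 this]

variable (G) in
def HG (ν : V → Fin 3 → V) : SimpleGraph (V × Fin 13) where
  Adj w x := (w.1 = x.1 ∧ gAdj w.2 x.2) ∨ Cross G ν w x
  symm := by
    constructor
    rintro w x (⟨h1, h2⟩ | h)
    · exact Or.inl ⟨h1.symm, gAdj_symm _ _ h2⟩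
    · exact Or.inr (cross_symm h)
  loopless := by
    constructor
    rintro w (⟨-, h⟩ | h)
    · exact gAdj_irrefl _ h
    · exact cross_ne h rfl

lemma hg_adj {ν : V → Fin 3 → V} {w x : V × Fin 13} :
    (HG G ν).Adj w x ↔ (w.1 = x.1 ∧ gAdj w.2 x.2) ∨ Cross G ν w x := Iff.rfl

lemma girth6 {ν : V → Fin 3 → V} (hν2 : ∀ u, Function.Injective (ν u)) :
    (6 : ℕ∞) ≤ (HG G ν).egirth := by
  rw [SimpleGraph.le_egirth]
  intro a w hw
  by_contra hlt
  push_neg at hlt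
  have hlen : w.length < 6 := by exact_mod_cast hlt
  have h3 := hw.three_le_length
  have hnd := hw.support_nodup
  have hcase : w.length = 3 ∨ w.length = 4 ∨ w.length = 5 := by omega
  rcases hcase with h | h | h
  · obtain ⟨x, y, h1, h2, h3, hsup⟩ := walk_len3 w h
    rw [hsup] at hnd
    simp only [List.tail_cons, List.nodup_cons, List.mem_cons, List.not_mem_nil,
      List.mem_singleton, List.nodup_nil, or_false, and_true, not_or] at hnd
    obtain ⟨⟨hxy, hxa⟩, hya, -⟩ := hnd
    rcases h1 with ⟨q1, r1⟩ | c1 <;> rcases h2 with ⟨q2, r2⟩ | c2 <;>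
      rcases h3 with ⟨q3, r3⟩ | c3
    all_goals first
      | (have p1 := gAdj_parity _ _ r1; have p2 := gAdj_parity _ _ r2;
         have p3 := gAdj_parity _ _ r3; omega)
      | exact cross_ne c1 (q2.trans q3).symm
      | exact cross_ne c2 (q3.trans q1).symm
      | exact cross_ne c3 (q1.trans q2).symm
      | exact hya (cross_consec hν2 (cross_symm c1) c2).symm
      | exact hxa (cross_consec hν2 (cross_symm c2) c3)
      | exact hxy (cross_consec hν2 (cross_symm c3) c1).symm
  · obtain ⟨x, y, z, h1, h2, h3, h4, hsup⟩ := walk_len4 w h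
    rw [hsup] at hnd
    simp only [List.tail_cons, List.nodup_cons, List.mem_cons, List.not_mem_nil,
      List.mem_singleton, List.nodup_nil, or_false, and_true, not_or] at hnd
    obtain ⟨⟨hxy, hxz, hxa⟩, ⟨hyz, hya⟩, hza, -⟩ := hnd
    rcases h1 with ⟨q1, r1⟩ | c1 <;> rcases h2 with ⟨q2, r2⟩ | c2 <;>
      rcases h3 with ⟨q3, r3⟩ | c3 <;> rcases h4 with ⟨q4, r4⟩ | c4
    all_goals first
      | exact (gadget_C4 _ _ _ _ r1 r2 r3 r4).elim
          (fun hh => hya (Prod.ext (q1.trans q2) hh).symm)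
          (fun hh => hxz (Prod.ext (q2.trans q3) hh))
      | exact cross_ne c1 ((q2.trans q3).trans q4).symm
      | exact cross_ne c2 ((q3.trans q4).trans q1).symm
      | exact cross_ne c3 ((q4.trans q1).trans q2).symm
      | exact cross_ne c4 ((q1.trans q2).trans q3).symm
      | exact hya (cross_consec hν2 (cross_symm c1) c2).symm
      | exact hxz (cross_consec hν2 (cross_symm c2) c3)
      | exact hya (cross_consec hν2 (cross_symm c3) c4)
      | exact hxz (cross_consec hν2 (cross_symm c4) c1).symm
      | exact hza (Prod.ext q4.symm
          (cross_port_eq hν2 c1 (cross_symm c3) q4.symm q2)).symm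
      | exact hxa (Prod.ext q1.symm
          (cross_port_eq hν2 c2 (cross_symm c4) q1.symm q3))
  · obtain ⟨x, y, z, u, h1, h2, h3, h4, h5, hsup⟩ := walk_len5 w h
    rw [hsup] at hnd
    simp only [List.tail_cons, List.nodup_cons, List.mem_cons, List.not_mem_nil,
      List.mem_singleton, List.nodup_nil, or_false, and_true, not_or] at hnd
    obtain ⟨⟨hxy, hxz, hxu, hxa⟩, ⟨hyz, hyu, hya⟩, ⟨hzu, hza⟩, hua, -⟩ := hnd
    rcases h1 with ⟨q1, r1⟩ | c1 <;> rcases h2 with ⟨q2, r2⟩ | c2 <;>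
      rcases h3 with ⟨q3, r3⟩ | c3 <;> rcases h4 with ⟨q4, r4⟩ | c4 <;>
      rcases h5 with ⟨q5, r5⟩ | c5
    all_goals first
      | (have p1 := gAdj_parity _ _ r1; have p2 := gAdj_parity _ _ r2;
         have p3 := gAdj_parity _ _ r3; have p4 := gAdj_parity _ _ r4;
         have p5 := gAdj_parity _ _ r5; omega)
      | exact cross_ne c1 (((q2.trans q3).trans q4).trans q5).symm
      | exact cross_ne c2 (((q3.trans q4).trans q5).trans q1).symm
      | exact cross_ne c3 (((q4.trans q5).trans q1).trans q2).symm
      | exact cross_ne c4 (((q5.trans q1).trans q2).trans q3).symm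
      | exact cross_ne c5 (((q1.trans q2).trans q3).trans q4).symm
      | exact hya (cross_consec hν2 (cross_symm c1) c2).symm
      | exact hxz (cross_consec hν2 (cross_symm c2) c3)
      | exact hyu (cross_consec hν2 (cross_symm c3) c4)
      | exact hza (cross_consec hν2 (cross_symm c4) c5)
      | exact hxu (cross_consec hν2 (cross_symm c5) c1).symm
      | exact hza (Prod.ext (q4.trans q5).symm
          (cross_port_eq hν2 c1 (cross_symm c3) (q4.trans q5).symm q2)).symm
      | exact hxu (Prod.ext (q5.trans q1).symm
          (cross_port_eq hν2 c2 (cross_symm c4) (q5.trans q1).symm q3))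
      | exact hya (Prod.ext (q1.trans q2).symm
          (cross_port_eq hν2 c3 (cross_symm c5) (q1.trans q2).symm q4))
      | exact hxz (Prod.ext (q2.trans q3).symm
          (cross_port_eq hν2 c4 (cross_symm c1) (q2.trans q3).symm q5)).symm
      | exact hyu (Prod.ext (q3.trans q4).symm
          (cross_port_eq hν2 c5 (cross_symm c2) (q3.trans q4).symm q1)).symm

lemma gN_card : ∀ s : Fin 13,
    (Finset.univ.filter (fun t => gAdj s t)).card = if s = 0 ∨ s = 8 ∨ s = 12 then 2 else 3 := by
  decide

lemma ports_cases : ∀ k : Fin 3, ports k = 0 ∨ ports k = 8 ∨ ports k = 12 := by decide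
lemma ports_complete : ∀ s : Fin 13, (s = 0 ∨ s = 8 ∨ s = 12) → ∃ k, ports k = s := by decide

lemma cross_set_eq {ν : V → Fin 3 → V} (hν1 : ∀ u k, G.Adj u (ν u k))
    (hν2 : ∀ u, Function.Injective (ν u)) {u : V} {k m : Fin 3}
    (hm : ν (ν u k) m = u) :
    {x : V × Fin 13 | Cross G ν (u, ports k) x} = {(ν u k, ports m)} := by
  ext ⟨v, t⟩
  simp only [Set.mem_setOf_eq, Set.mem_singleton_iff, Prod.mk.injEq]
  constructor
  · rintro ⟨-, k', m', h1, h2, h3, h4⟩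
    have hk : k = k' := ports_inj h3
    subst hk
    simp only at h1 h2 h4
    subst h1
    have : m' = m := hν2 _ (h2.trans hm.symm)
    subst this
    exact ⟨rfl, h4⟩
  · rintro ⟨rfl, rfl⟩
    exact ⟨hν1 u k, k, m, rfl, hm, rfl, rfl⟩

lemma cross_set_empty {ν : V → Fin 3 → V} {u : V} {s : Fin 13}
    (hs : ¬(s = 0 ∨ s = 8 ∨ s = 12)) :
    {x : V × Fin 13 | Cross G ν (u, s) x} = ∅ := by
  ext ⟨v, t⟩
  simp only [Set.mem_setOf_eq, Set.mem_empty_iff_false, iff_false]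
  rintro ⟨-, k, m, h1, h2, h3, h4⟩
  simp only at h3
  subst h3
  exact hs (ports_cases k)

lemma internal_set_eq (u : V) (s : Fin 13) :
    {x : V × Fin 13 | (u, s).1 = x.1 ∧ gAdj (u, s).2 x.2} =
      Prod.mk u '' ↑(Finset.univ.filter (fun t => gAdj s t)) := by
  ext ⟨v, t⟩
  simp only [Set.mem_setOf_eq, Set.mem_image, Finset.coe_filter, Finset.mem_univ, true_and,
    Set.mem_setOf_eq, Prod.mk.injEq]
  constructor
  · rintro ⟨rfl, h⟩
    exact ⟨t, h, rfl, rfl⟩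
  · rintro ⟨t', h, rfl, rfl⟩
    exact ⟨rfl, h⟩

lemma degree_three {ν : V → Fin 3 → V} (hν1 : ∀ u k, G.Adj u (ν u k))
    (hν2 : ∀ u, Function.Injective (ν u))
    (hν3 : ∀ u v, G.Adj u v → ∃ k, ν u k = v) :
    ∀ w : V × Fin 13, ((HG G ν).neighborSet w).ncard = 3 := by
  classical
  rintro ⟨u, s⟩
  have hdecomp : (HG G ν).neighborSet (u, s) =
      {x : V × Fin 13 | (u, s).1 = x.1 ∧ gAdj (u, s).2 x.2} ∪
      {x : V × Fin 13 | Cross G ν (u, s) x} := rfl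
  have hinj : Function.Injective (Prod.mk u : Fin 13 → V × Fin 13) := by
    intro a b h
    exact (Prod.mk.injEq _ _ _ _ ▸ h : u = u ∧ a = b).2
  have hIcard : {x : V × Fin 13 | (u, s).1 = x.1 ∧ gAdj (u, s).2 x.2}.ncard =
      (Finset.univ.filter (fun t => gAdj s t)).card := by
    rw [internal_set_eq, Set.ncard_image_of_injective _ hinj, Set.ncard_coe_finset]
  by_cases hs : s = 0 ∨ s = 8 ∨ s = 12
  · obtain ⟨k, rfl⟩ := ports_complete s hs
    obtain ⟨m, hm⟩ := hν3 (ν u k) u (hν1 u k).symm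
    rw [hdecomp, cross_set_eq hν1 hν2 hm, Set.ncard_union_eq ?dis (Set.toFinite _)
      (Set.toFinite _), hIcard, gN_card, if_pos hs, Set.ncard_singleton]
    case dis =>
      rw [Set.disjoint_singleton_right, internal_set_eq]
      rintro ⟨t, -, he⟩
      exact (hν1 u k).ne' ((Prod.mk.injEq _ _ _ _ ▸ he : u = ν u k ∧ _).1).symm
  · rw [hdecomp, cross_set_empty hs, Set.union_empty, hIcard, gN_card, if_neg hs]

lemma walk_to_zero {ν : V → Fin 3 → V} (u : V) :
    ∀ (n : ℕ) (h : n < 13), ∃ p : (HG G ν).Walk (u, ⟨n, h⟩) (u, (0 : Fin 13)), p.length = n := by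
  intro n
  induction n with
  | zero =>
    intro h
    refine ⟨SimpleGraph.Walk.nil.copy (by ext <;> simp) rfl, by simp⟩
  | succ n ih =>
    intro h
    obtain ⟨p, hp⟩ := ih (by omega)
    refine ⟨SimpleGraph.Walk.cons ?_ p, ?_⟩
    · exact Or.inl ⟨rfl, Or.inl (Or.inr rfl)⟩
    · exact congrArg (· + 1) hp

lemma reach_zero {ν : V → Fin 3 → V} (u : V) (s : Fin 13) :
    ∃ p : (HG G ν).Walk (u, s) (u, (0 : Fin 13)), p.length ≤ 12 := by
  obtain ⟨p, hp⟩ := walk_to_zero (G := G) (ν := ν) u s.val s.isLt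
  refine ⟨p.copy (by simp) rfl, ?_⟩
  rw [SimpleGraph.Walk.length_copy, hp]
  omega

lemma walk_adj {ν : V → Fin 3 → V} (hν3 : ∀ u v, G.Adj u v → ∃ k, ν u k = v)
    {u v : V} (huv : G.Adj u v) :
    ∃ q : (HG G ν).Walk (u, (0 : Fin 13)) (v, (0 : Fin 13)), q.length ≤ 25 := by
  obtain ⟨k, hk⟩ := hν3 u v huv
  obtain ⟨m, hm⟩ := hν3 v u huv.symm
  have hadj : (HG G ν).Adj (u, ports k) (v, ports m) :=
    Or.inr ⟨huv, k, m, hk, hm, rfl, rfl⟩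
  obtain ⟨p₁, h₁⟩ := reach_zero (G := G) (ν := ν) u (ports k)
  obtain ⟨p₂, h₂⟩ := reach_zero (G := G) (ν := ν) v (ports m)
  refine ⟨p₁.reverse.append (SimpleGraph.Walk.cons hadj p₂), ?_⟩
  simp only [SimpleGraph.Walk.length_append, SimpleGraph.Walk.length_reverse,
    SimpleGraph.Walk.length_cons]
  omega

lemma walk_lift {ν : V → Fin 3 → V} (hν3 : ∀ u v, G.Adj u v → ∃ k, ν u k = v) :
    ∀ {u v : V} (p : G.Walk u v),
      ∃ q : (HG G ν).Walk (u, (0 : Fin 13)) (v, (0 : Fin 13)), q.length ≤ 25 * p.length := by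
  intro u v p
  induction p with
  | nil => exact ⟨SimpleGraph.Walk.nil, by simp⟩
  | cons h p ih =>
    obtain ⟨q₁, hq₁⟩ := walk_adj (G := G) hν3 h
    obtain ⟨q₂, hq₂⟩ := ih
    refine ⟨q₁.append q₂, ?_⟩
    simp only [SimpleGraph.Walk.length_append, SimpleGraph.Walk.length_cons]
    omega

lemma walk_proj {ν : V → Fin 3 → V} :
    ∀ {w x : V × Fin 13} (q : (HG G ν).Walk w x), ∃ p : G.Walk w.1 x.1, p.length ≤ q.length := by
  intro w x q
  induction q with
  | nil => exact ⟨SimpleGraph.Walk.nil, by simp⟩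
  | @cons w y x h q ih =>
    obtain ⟨p, hp⟩ := ih
    rcases h with ⟨he, -⟩ | hc
    · refine ⟨p.copy he.symm rfl, ?_⟩
      rw [SimpleGraph.Walk.length_copy]
      exact Nat.le_succ_of_le hp
    · refine ⟨SimpleGraph.Walk.cons hc.1 p, ?_⟩
      exact Nat.succ_le_succ hp

lemma hg_connected {ν : V → Fin 3 → V} (hν3 : ∀ u v, G.Adj u v → ∃ k, ν u k = v)
    (hconn : G.Connected) : (HG G ν).Connected := by
  rw [SimpleGraph.connected_iff]
  constructor
  · rintro ⟨u, s⟩ ⟨v, t⟩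
    obtain ⟨p₀, -⟩ := reach_zero (G := G) (ν := ν) u s
    obtain ⟨p₂, -⟩ := reach_zero (G := G) (ν := ν) v t
    obtain ⟨pg⟩ := hconn.preconnected u v
    obtain ⟨q, -⟩ := walk_lift (G := G) hν3 pg
    exact ⟨(p₀.append q).append p₂.reverse⟩
  · obtain ⟨v⟩ := hconn.nonempty
    exact ⟨(v, 0)⟩

end Main

end QI6

open QI6

/-- There exist absolute constants `a ≥ 1` and `b ≥ 0` such that every finite
connected trivalent (cubic) simple graph `G` admits an `(a,b)`-quasi-isometry to some finite
connected trivalent simple graph `H` of girth at least `6`. -/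
theorem trivalent_graph_quasi_isometric_to_girth_six :
    ∃ a : ℝ, 1 ≤ a ∧ ∃ b : ℝ, 0 ≤ b ∧
      ∀ (V : Type) [Fintype V] (G : SimpleGraph V),
        G.Connected → (∀ v : V, (G.neighborSet v).ncard = 3) →
        ∃ (W : Type) (_ : Fintype W) (H : SimpleGraph W),
          H.Connected ∧ (∀ w : W, (H.neighborSet w).ncard = 3) ∧
          (6 : ℕ∞) ≤ H.egirth ∧
          ∃ f : V → W,
            (∀ x y : V,
              (1 / a) * (G.dist x y : ℝ) - b ≤ (H.dist (f x) (f y) : ℝ) ∧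
              (H.dist (f x) (f y) : ℝ) ≤ a * (G.dist x y : ℝ) + b) ∧
            (∀ w : W, ∃ x : V, (H.dist (f x) w : ℝ) ≤ b) := by
  refine ⟨25, by norm_num, 25, by norm_num, ?_⟩
  intro V _ G hconn hdeg
  obtain ⟨ν, hν1, hν2, hν3⟩ := exists_enum hdeg
  have hHconn : (HG G ν).Connected := hg_connected hν3 hconn
  refine ⟨V × Fin 13, inferInstance, HG G ν, hHconn, degree_three hν1 hν2 hν3,
    girth6 hν2, fun v => (v, (0 : Fin 13)), ?_, ?_⟩
  · intro x y
    -- lower bound via projection, upper via lifting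
    have hlow : G.dist x y ≤ (HG G ν).dist (x, (0 : Fin 13)) (y, (0 : Fin 13)) := by
      obtain ⟨q, hq⟩ :=
        (hHconn.preconnected (x, (0 : Fin 13)) (y, (0 : Fin 13))).exists_walk_length_eq_dist
      obtain ⟨p, hp⟩ := walk_proj q
      calc G.dist x y ≤ p.length := SimpleGraph.dist_le p
        _ ≤ q.length := hp
        _ = _ := hq
    have hup : (HG G ν).dist (x, (0 : Fin 13)) (y, (0 : Fin 13)) ≤ 25 * G.dist x y := by
      obtain ⟨p, hp⟩ := (hconn.preconnected x y).exists_walk_length_eq_dist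
      obtain ⟨q, hq⟩ := walk_lift hν3 p
      calc (HG G ν).dist _ _ ≤ q.length := SimpleGraph.dist_le q
        _ ≤ 25 * p.length := hq
        _ = 25 * G.dist x y := by rw [hp]
    have h1 : (G.dist x y : ℝ) ≤ ((HG G ν).dist (x, (0 : Fin 13)) (y, (0 : Fin 13)) : ℝ) := by
      exact_mod_cast hlow
    have h2 : ((HG G ν).dist (x, (0 : Fin 13)) (y, (0 : Fin 13)) : ℝ) ≤ 25 * G.dist x y := by
      exact_mod_cast hup
    have h3 : (0 : ℝ) ≤ (G.dist x y : ℝ) := Nat.cast_nonneg _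
    constructor <;> [skip; linarith]
    linarith
  · rintro ⟨u, s⟩
    refine ⟨u, ?_⟩
    obtain ⟨p, hp⟩ := reach_zero (G := G) (ν := ν) u s
    have : (HG G ν).dist (u, (0 : Fin 13)) (u, s) ≤ 12 := by
      calc (HG G ν).dist _ _ ≤ p.reverse.length := SimpleGraph.dist_le p.reverse
        _ ≤ 12 := by rw [SimpleGraph.Walk.length_reverse]; omega
    have h25 : ((HG G ν).dist (u, (0 : Fin 13)) (u, s) : ℝ) ≤ 12 := by exact_mod_cast this
    linarith
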